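/- Let f₁(z) = ∑ aₙ zⁿ and f₂(z) = ∑ bₙ zⁿ be power series with radii of convergence r₁ > 0 and r₂ > 0. Then the Hadamard product (f₁ ⊛ f₂)(z) = ∑ aₙ bₙ zⁿ converges for |z| < r₁r₂, and for any ρ ∈ (0, r₁) and |z| < ρ·r₂ it equals (1/2πi) ∮_{|s|=ρ} (ds/s) f₁(s) f₂(z/s). -/

import Mathlib

open Complex

lemma geom_bound {a : ℕ → ℂ} {r s : ℝ} (hs : 0 < s) (hsr : s < r)
    (ha : ∀ z : ℂ, ‖z‖ < r → Summable (fun n => a n * z ^ n)) :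
    ∃ C : ℝ, 0 ≤ C ∧ ∀ n, ‖a n‖ * s ^ n ≤ C := by
  have h := ha (s : ℂ) (by simpa [abs_of_pos hs] using hsr)
  have h0 := (h.tendsto_atTop_zero).norm
  obtain ⟨C, hC⟩ := h0.bddAbove_range
  refine ⟨C, le_trans (norm_nonneg _) (hC ⟨0, rfl⟩), fun n => ?_⟩
  have := hC (Set.mem_range_self n)
  simpa [norm_mul, norm_pow, Real.norm_eq_abs, abs_of_pos hs] using this

lemma abs_summable {a : ℕ → ℂ} {r t : ℝ} (hr : 0 < r) (ht : 0 ≤ t) (htr : t < r)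
    (ha : ∀ z : ℂ, ‖z‖ < r → Summable (fun n => a n * z ^ n)) :
    Summable (fun n => ‖a n‖ * t ^ n) := by
  set s : ℝ := (t + r) / 2 with hsdef
  have hs0 : 0 < s := by positivity
  have hts : t < s := by simp only [hsdef]; linarith
  have hsr : s < r := by simp only [hsdef]; linarith
  obtain ⟨C, hC0, hC⟩ := geom_bound hs0 hsr ha
  have hq0 : 0 ≤ t / s := by positivity
  have hq1 : t / s < 1 := (div_lt_one hs0).2 hts
  refine Summable.of_nonneg_of_le (fun n => by positivity) (fun n => ?_)
    ((summable_geometric_of_lt_one hq0 hq1).mul_left C)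
  have hpow : (t / s) ^ n * s ^ n = t ^ n := by
    rw [div_pow, div_mul_cancel₀ _ (pow_ne_zero n hs0.ne')]
  calc ‖a n‖ * t ^ n = (‖a n‖ * s ^ n) * (t / s) ^ n := by rw [← hpow]; ring
    _ ≤ C * (t / s) ^ n := mul_le_mul_of_nonneg_right (hC n) (by positivity)

lemma part1 {a b : ℕ → ℂ} {r₁ r₂ : ℝ} (hr₁ : 0 < r₁) (hr₂ : 0 < r₂)
    (ha : ∀ z : ℂ, ‖z‖ < r₁ → Summable (fun n => a n * z ^ n))
    (hb : ∀ z : ℂ, ‖z‖ < r₂ → Summable (fun n => b n * z ^ n))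
    (z : ℂ) (hz : ‖z‖ < r₁ * r₂) : Summable (fun n => a n * b n * z ^ n) := by
  set u : ℝ := ‖z‖ / (r₁ * r₂) with hu
  have hu0 : 0 ≤ u := by positivity
  have hu1 : u < 1 := (div_lt_one (by positivity)).2 hz
  set c : ℝ := Real.sqrt ((u + 1) / 2) with hc
  have hc2 : c ^ 2 = (u + 1) / 2 := Real.sq_sqrt (by linarith)
  have hc0 : 0 < c := Real.sqrt_pos.2 (by linarith)
  have hc1 : c < 1 := by nlinarith [hc2, hc0]
  set s₁ : ℝ := c * r₁ with hs₁
  set s₂ : ℝ := c * r₂ with hs₂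
  have hs₁0 : 0 < s₁ := by positivity
  have hs₂0 : 0 < s₂ := by positivity
  have hs₁r : s₁ < r₁ := by nlinarith
  have hs₂r : s₂ < r₂ := by nlinarith
  have hzs : ‖z‖ < s₁ * s₂ := by
    have : ‖z‖ = u * (r₁ * r₂) := by
      rw [hu, div_mul_cancel₀ _ (by positivity : r₁ * r₂ ≠ 0)]
    rw [this]
    have : s₁ * s₂ = c ^ 2 * (r₁ * r₂) := by rw [hs₁, hs₂]; ring
    rw [this, hc2]
    nlinarith
  obtain ⟨A, hA0, hA⟩ := geom_bound hs₁0 hs₁r ha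
  obtain ⟨B, hB0, hB⟩ := geom_bound hs₂0 hs₂r hb
  have hq0 : 0 ≤ ‖z‖ / (s₁ * s₂) := by positivity
  have hq1 : ‖z‖ / (s₁ * s₂) < 1 := (div_lt_one (by positivity)).2 hzs
  refine Summable.of_norm_bounded
    ((summable_geometric_of_lt_one hq0 hq1).mul_left (A * B)) (fun n => ?_)
  have hpow : (‖z‖ / (s₁ * s₂)) ^ n * (s₁ * s₂) ^ n = ‖z‖ ^ n := by
    rw [div_pow, div_mul_cancel₀ _ (pow_ne_zero n (by positivity))]
  calc ‖a n * b n * z ^ n‖ = ‖a n‖ * ‖b n‖ * ‖z‖ ^ n := by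
        rw [norm_mul, norm_mul, norm_pow]
    _ = (‖a n‖ * s₁ ^ n) * (‖b n‖ * s₂ ^ n) * (‖z‖ / (s₁ * s₂)) ^ n := by
        rw [← hpow]; ring
    _ ≤ (A * B) * (‖z‖ / (s₁ * s₂)) ^ n := by
        have h1 : (‖a n‖ * s₁ ^ n) * (‖b n‖ * s₂ ^ n) ≤ A * B :=
          mul_le_mul (hA n) (hB n) (by positivity) hA0
        exact mul_le_mul_of_nonneg_right h1 (by positivity)

open MeasureTheory in
lemma part2 {a b : ℕ → ℂ} {r₁ r₂ : ℝ} (hr₁ : 0 < r₁) (hr₂ : 0 < r₂)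
    (ha : ∀ z : ℂ, ‖z‖ < r₁ → Summable (fun n => a n * z ^ n))
    (hb : ∀ z : ℂ, ‖z‖ < r₂ → Summable (fun n => b n * z ^ n))
    (ρ : ℝ) (hρ : ρ ∈ Set.Ioo 0 r₁) (z : ℂ) (hz : ‖z‖ < ρ * r₂) :
    ∑' n : ℕ, a n * b n * z ^ n
      = (1 / (2 * Real.pi * I)) *
          ∮ s in C(0, ρ), (∑' n : ℕ, a n * s ^ n) * (∑' n : ℕ, b n * (z / s) ^ n) / s := by
  obtain ⟨hρ0, hρr⟩ := hρ
  have hρ0' : (ρ : ℝ) ≠ 0 := ne_of_gt hρ0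
  have hle : (0 : ℝ) ≤ 2 * Real.pi := by positivity
  set w : ℝ := ‖z‖ / ρ with hwdef
  have hw0 : 0 ≤ w := by positivity
  have hwr : w < r₂ := (div_lt_iff₀ hρ0).2 (by linarith)
  have hA : Summable (fun n => ‖a n‖ * ρ ^ n) := abs_summable hr₁ hρ0.le hρr ha
  have hB : Summable (fun m => ‖b m‖ * w ^ m) := abs_summable hr₂ hw0 hwr hb
  -- the terms of the double series
  set g : ℕ × ℕ → ℂ → ℂ :=
    fun p s => (a p.1 * (b p.2 * z ^ p.2)) * s ^ ((p.1 : ℤ) - p.2 - 1) with hgdef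
  -- properties of points on the circle
  have hsnorm : ∀ θ : ℝ, ‖circleMap 0 ρ θ‖ = ρ := by
    intro θ
    rw [norm_circleMap_zero, abs_of_pos hρ0]
  have hsne : ∀ θ : ℝ, circleMap 0 ρ θ ≠ 0 := fun θ => circleMap_ne_center hρ0'
  -- circle integrability of each term
  have hgint : ∀ p : ℕ × ℕ, CircleIntegrable (g p) 0 ρ := by
    intro p
    have h1 : CircleIntegrable (fun s : ℂ => (s - 0) ^ ((p.1 : ℤ) - p.2 - 1)) 0 ρ := by
      rw [circleIntegrable_sub_zpow_iff]
      refine Or.inr (Or.inr ?_)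
      simp [abs_of_pos hρ0, hρ0'.symm]
    simp only [sub_zero] at h1
    exact IntervalIntegrable.const_mul h1 _
  -- the integrand over [0, 2π]
  set G : ℕ × ℕ → ℝ → ℂ :=
    fun p θ => deriv (circleMap 0 ρ) θ • g p (circleMap 0 ρ θ) with hGdef
  set μ : Measure ℝ := volume.restrict (Set.Ioc (0 : ℝ) (2 * Real.pi)) with hμdef
  have hGint : ∀ p, Integrable (G p) μ := by
    intro p
    rw [hμdef, ← IntegrableOn, ← intervalIntegrable_iff_integrableOn_Ioc_of_le hle]
    exact (hgint p).out
  -- norm of G is constant in θ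
  have hGnorm : ∀ p θ, ‖G p θ‖
      = ρ * (‖a p.1 * (b p.2 * z ^ p.2)‖ * ρ ^ ((p.1 : ℤ) - p.2 - 1)) := by
    intro p θ
    rw [hGdef]
    simp only [norm_smul, deriv_circleMap, norm_mul, Complex.norm_I, mul_one,
      norm_circleMap_zero, abs_of_pos hρ0, hgdef]
    rw [norm_zpow, norm_circleMap_zero, abs_of_pos hρ0]
  -- value of ∫ ‖G p‖
  have hGnormint : ∀ p : ℕ × ℕ, ∫ θ, ‖G p θ‖ ∂μ
      = (2 * Real.pi) * (ρ * (‖a p.1 * (b p.2 * z ^ p.2)‖ * ρ ^ ((p.1 : ℤ) - p.2 - 1))) := by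
    intro p
    simp only [hGnorm p]
    rw [hμdef, integral_const, measureReal_def, Measure.restrict_apply_univ, Real.volume_Ioc]
    rw [ENNReal.toReal_ofReal (by linarith), smul_eq_mul]
    ring_nf
  -- key power identity
  have hkey : ∀ n m : ℕ, ρ * ((ρ : ℝ) ^ ((n : ℤ) - m - 1) * ‖z‖ ^ m) = ρ ^ n * w ^ m := by
    intro n m
    have h1 : (ρ : ℝ) ^ ((n : ℤ) - m - 1) = ρ ^ (n : ℤ) / ρ ^ (m : ℤ) / ρ := by
      rw [zpow_sub₀ hρ0', zpow_sub₀ hρ0', zpow_one]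
    rw [h1, zpow_natCast, zpow_natCast, hwdef, div_pow]
    field_simp
  -- summability of the integral norms
  have hsumnorm : Summable (fun p : ℕ × ℕ => ∫ θ, ‖G p θ‖ ∂μ) := by
    have hs : Summable (fun p : ℕ × ℕ =>
        (2 * Real.pi) * ((‖a p.1‖ * ρ ^ p.1) * (‖b p.2‖ * w ^ p.2))) :=
      (hA.mul_of_nonneg hB (fun n => by positivity) (fun m => by positivity)).mul_left _
    refine hs.congr (fun p => ?_)
    rw [hGnormint p]
    have : ‖a p.1 * (b p.2 * z ^ p.2)‖ = ‖a p.1‖ * (‖b p.2‖ * ‖z‖ ^ p.2) := by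
      rw [norm_mul, norm_mul, norm_pow]
    rw [this]
    have h2 := hkey p.1 p.2
    linear_combination (-(2 * Real.pi * ‖a p.1‖ * ‖b p.2‖)) * h2
  -- the swap
  have hswap := MeasureTheory.hasSum_integral_of_summable_integral_norm
    (μ := μ) (F := G) hGint hsumnorm
  -- pointwise identity on the circle
  have hpt : ∀ θ : ℝ, (∑' p : ℕ × ℕ, G p θ)
      = deriv (circleMap 0 ρ) θ •
        ((∑' n : ℕ, a n * (circleMap 0 ρ θ) ^ n)
          * (∑' m : ℕ, b m * (z / circleMap 0 ρ θ) ^ m) / circleMap 0 ρ θ) := by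
    intro θ
    set s : ℂ := circleMap 0 ρ θ with hs
    have hs0 : s ≠ 0 := hsne θ
    have hsn : ‖s‖ = ρ := hsnorm θ
    have hA' : Summable (fun n => ‖a n * s ^ n‖) := by
      refine hA.congr (fun n => ?_)
      rw [norm_mul, norm_pow, hsn]
    have hB' : Summable (fun m => ‖b m * (z / s) ^ m‖) := by
      refine hB.congr (fun m => ?_)
      rw [norm_mul, norm_pow, norm_div, hsn, hwdef]
    rw [tsum_mul_tsum_of_summable_norm hA' hB', ← tsum_div_const]
    rw [smul_eq_mul, ← tsum_mul_left]
    refine tsum_congr (fun p => ?_)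
    have hpow : (s : ℂ) ^ ((p.1 : ℤ) - p.2 - 1) = s ^ p.1 / s ^ p.2 / s := by
      rw [zpow_sub₀ hs0, zpow_sub₀ hs0, zpow_one, zpow_natCast, zpow_natCast]
    rw [hGdef, hgdef]
    simp only [smul_eq_mul]
    rw [← hs, hpow, div_pow]
    ring
  -- from interval integral back to circle integral per term
  have hGcirc : ∀ p, ∫ θ, G p θ ∂μ = ∮ s in C(0, ρ), g p s := by
    intro p
    rw [circleIntegral, intervalIntegral.integral_of_le hle, hμdef]
  -- value of each circle integral
  have hgval : ∀ p : ℕ × ℕ, (∮ s in C(0, ρ), g p s)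
      = if p.2 = p.1 then (2 * Real.pi * I) * (a p.1 * (b p.2 * z ^ p.2)) else 0 := by
    rintro ⟨n, m⟩
    have : (∮ s in C(0, ρ), g (n, m) s)
        = (a n * (b m * z ^ m)) * ∮ s in C(0, ρ), s ^ ((n : ℤ) - m - 1) := by
      rw [hgdef]
      exact circleIntegral.integral_const_mul _ _ _ _
    rw [this]
    by_cases h : m = n
    · subst h
      have he : ((m : ℤ) - m - 1) = -1 := by ring
      rw [he, if_pos rfl]
      have : (∮ s in C(0, ρ), s ^ (-1 : ℤ)) = 2 * Real.pi * I := by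
        have h2 := circleIntegral.integral_sub_inv_of_mem_ball
          (c := 0) (w := 0) (R := ρ) (by simpa using hρ0)
        refine Eq.trans ?_ h2
        apply circleIntegral.integral_congr hρ0.le
        intro x _
        simp [zpow_neg_one]
      rw [this]; ring
    · have he : ((n : ℤ) - m - 1) ≠ -1 := by omega
      rw [if_neg h]
      have : (∮ s in C(0, ρ), s ^ ((n : ℤ) - m - 1)) = 0 := by
        have h2 := circleIntegral.integral_sub_zpow_of_ne he 0 0 ρ
        refine Eq.trans ?_ h2
        apply circleIntegral.integral_congr hρ0.le
        intro x _
        simp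
      rw [this, mul_zero]
  -- assemble
  have hFeq : (∮ s in C(0, ρ),
      (∑' n : ℕ, a n * s ^ n) * (∑' m : ℕ, b m * (z / s) ^ m) / s)
      = ∑' p : ℕ × ℕ, ∫ θ, G p θ ∂μ := by
    rw [hswap.tsum_eq, circleIntegral, intervalIntegral.integral_of_le hle]
    exact integral_congr_ae (Filter.EventuallyEq.symm (Filter.Eventually.of_forall
      (fun θ => hpt θ)))
  have hsum2 : Summable (fun p : ℕ × ℕ =>
      if p.2 = p.1 then (2 * Real.pi * I) * (a p.1 * (b p.2 * z ^ p.2)) else 0) :=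
    hswap.summable.congr (fun p => by rw [hGcirc, hgval])
  have hdiag : (∑' p : ℕ × ℕ,
      if p.2 = p.1 then (2 * Real.pi * I) * (a p.1 * (b p.2 * z ^ p.2)) else 0)
      = (2 * Real.pi * I) * ∑' n : ℕ, a n * b n * z ^ n := by
    rw [Summable.tsum_prod' hsum2 (fun n => by
      apply summable_of_ne_finset_zero (s := {n})
      intro m hm
      simp only [Finset.mem_singleton] at hm
      rw [if_neg hm])]
    have : ∀ n : ℕ, (∑' m : ℕ,
        if m = n then (2 * Real.pi * I) * (a n * (b m * z ^ m)) else 0)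
        = (2 * Real.pi * I) * (a n * b n * z ^ n) := by
      intro n
      have h1 : (fun m : ℕ => if m = n then (2 * Real.pi * I) * (a n * (b m * z ^ m)) else 0)
          = fun m : ℕ => if m = n then (2 * Real.pi * I) * (a n * b n * z ^ n) else 0 := by
        funext m
        by_cases h : m = n
        · subst h; rw [if_pos rfl, if_pos rfl]; ring
        · rw [if_neg h, if_neg h]
      rw [h1, tsum_ite_eq]
    rw [tsum_congr this, tsum_mul_left]
  have hmain : (∮ s in C(0, ρ),
      (∑' n : ℕ, a n * s ^ n) * (∑' m : ℕ, b m * (z / s) ^ m) / s)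
      = (2 * Real.pi * I) * ∑' n : ℕ, a n * b n * z ^ n := by
    rw [hFeq, tsum_congr (fun p => by rw [hGcirc, hgval]), hdiag]
  rw [hmain]
  have h2πI : (2 * (Real.pi : ℂ) * I) ≠ 0 := by
    simp [Real.pi_ne_zero, I_ne_zero]
  rw [← mul_assoc, one_div, inv_mul_cancel₀ h2πI, one_mul]

/-- Hadamard product lemma: if `f₁(z) = ∑ aₙ zⁿ` and `f₂(z) = ∑ bₙ zⁿ` have radii of
convergence `r₁ > 0` and `r₂ > 0`, then `(f₁ ⊛ f₂)(z) = ∑ aₙbₙzⁿ` converges for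
`|z| < r₁r₂`, and for `ρ ∈ (0, r₁)` and `|z| < ρ·r₂` it equals
`(1/2πi) ∮_{|s|=ρ} (ds/s) f₁(s) f₂(z/s)`. -/
theorem hadamard_product (a b : ℕ → ℂ) (r₁ r₂ : ℝ) (hr₁ : 0 < r₁) (hr₂ : 0 < r₂)
    (ha : ∀ z : ℂ, ‖z‖ < r₁ → Summable (fun n => a n * z ^ n))
    (hb : ∀ z : ℂ, ‖z‖ < r₂ → Summable (fun n => b n * z ^ n)) :
    (∀ z : ℂ, ‖z‖ < r₁ * r₂ → Summable (fun n => a n * b n * z ^ n)) ∧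
    (∀ ρ : ℝ, ρ ∈ Set.Ioo 0 r₁ → ∀ z : ℂ, ‖z‖ < ρ * r₂ →
      ∑' n : ℕ, a n * b n * z ^ n
        = (1 / (2 * Real.pi * I)) *
            ∮ s in C(0, ρ), (∑' n : ℕ, a n * s ^ n) * (∑' n : ℕ, b n * (z / s) ^ n) / s) := by
  exact ⟨fun z hz => part1 hr₁ hr₂ ha hb z hz,
    fun ρ hρ z hz => part2 hr₁ hr₂ ha hb ρ hρ z hz⟩
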